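/- Bayesian-Nash equilibrium of the fixed-k PAC mechanism (Theorem 1): let μ be a probability measure over opponents' truthful valuation profiles such that for μ-almost every profile the PAC feasibility condition holds and the utility functions are integrable. Then for every client i with true valuation v_i and every nonnegative misreport r′, the expected utility of truthful reporting weakly dominates the expected utility of misreporting: ∫ u_i(v_i, b_{−i}) dμ(b_{−i}) ≥ ∫ u_i(r′, b_{−i}) dμ(b_{−i}). -/

import Mathlib

open Classical MeasureTheory

/-- The `j`-th smallest report (0-indexed) of a report profile `r : Fin n → ℝ`:
the entry at index `j` of the list sorting the multiset of reports nondecreasingly. -/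
noncomputable def orderStat (n : ℕ) (r : Fin n → ℝ) (j : ℕ) : ℝ :=
  ((Finset.univ.val.map r).sort (· ≤ ·)).getD j 0

/-- Client `i` is a winner of the fixed-`k` PAC mechanism on report profile `r` iff
the number of indices `j` with `r j < r i`, or with `r j = r i` and `j ≤ i`, is at
most `k` (i.e. `i` is among the `k` smallest reports, ties broken by lower index). -/
noncomputable def isWinner (n k : ℕ) (r : Fin n → ℝ) (i : Fin n) : Prop :=
  (Finset.univ.filter (fun j : Fin n => r j < r i ∨ (r j = r i ∧ j ≤ i))).card ≤ k

/-- Utility of client `i` with true valuation `vi` under report profile `r` in the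
fixed-`k` PAC mechanism with budget `B`: a winner is paid
`min (B/k) (r_(k+1) / (n-k))` and incurs privacy cost `vi / (n-k)`; a loser gets `0`. -/
noncomputable def utilPAC (n k : ℕ) (B : ℝ) (vi : ℝ) (r : Fin n → ℝ) (i : Fin n) : ℝ :=
  if isWinner n k r i then
    min (B / k) (orderStat n r k / ((n : ℝ) - k)) - vi / ((n : ℝ) - k)
  else 0

namespace PACaux

/-- monotonicity of getD on a sorted list -/
lemma sorted_getD_mono {s : List ℝ} (hs : s.Pairwise (· ≤ ·)) {j j' : ℕ}
    (hjj : j ≤ j') (hj' : j' < s.length) : s.getD j 0 ≤ s.getD j' 0 := by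
  have hj : j < s.length := lt_of_le_of_lt hjj hj'
  rw [List.getD_eq_getElem _ _ hj, List.getD_eq_getElem _ _ hj']
  exact hs.rel_get_of_le (a := ⟨j, hj⟩) (b := ⟨j', hj'⟩) hjj

/-- if the j-th entry is < c, at least j+1 entries are < c -/
lemma lt_count_of_getD_lt {s : List ℝ} (hs : s.Pairwise (· ≤ ·)) {j : ℕ} {c : ℝ}
    (hj : j < s.length) (h : s.getD j 0 < c) :
    j + 1 ≤ s.countP (fun a => decide (a < c)) := by
  have hsub : s = s.take (j+1) ++ s.drop (j+1) := (List.take_append_drop _ _).symm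
  have hlen : (s.take (j+1)).length = j + 1 := by
    rw [List.length_take]; omega
  have hall : ∀ a ∈ s.take (j+1), a < c := by
    intro a ha
    obtain ⟨m, hm, rfl⟩ := List.mem_take_iff_getElem.1 ha
    have hmj : m ≤ j := by omega
    have hmlen : m < s.length := by omega
    calc s[m] ≤ s[j] := by
          have h2 := hs.rel_get_of_le (a := ⟨m, hmlen⟩) (b := ⟨j, hj⟩) hmj
          simpa [List.get_eq_getElem, Fin.val_mk] using h2
      _ < c := by rwa [List.getD_eq_getElem _ _ hj] at h
  have hcl : (s.take (j+1)).countP (fun a => decide (a < c)) = (s.take (j+1)).length :=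
    List.countP_eq_length.2 (fun a ha => by simp only [decide_eq_true_eq]; exact hall a ha)
  calc j + 1 = (s.take (j+1)).countP (fun a => decide (a < c)) := by rw [hcl, hlen]
    _ ≤ s.countP (fun a => decide (a < c)) := by
        conv_rhs => rw [hsub]
        rw [List.countP_append]; omega

/-- if the j-th entry is > c, at most j entries are ≤ c -/
lemma count_le_of_lt_getD {s : List ℝ} (hs : s.Pairwise (· ≤ ·)) {j : ℕ} {c : ℝ}
    (hj : j < s.length) (h : c < s.getD j 0) :
    s.countP (fun a => decide (a ≤ c)) ≤ j := by
  have hsub : s = s.take j ++ s.drop j := (List.take_append_drop _ _).symm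
  have hzero : (s.drop j).countP (fun a => decide (a ≤ c)) = 0 := by
    rw [List.countP_eq_zero]
    intro a ha
    obtain ⟨m, hm, rfl⟩ := List.mem_drop_iff_getElem.1 ha
    have h3 : s[j] ≤ s[j + m] := by
      have h2 := hs.rel_get_of_le (a := ⟨j, hj⟩) (b := ⟨j + m, by omega⟩) (by
        show j ≤ j + m; omega)
      simpa [List.get_eq_getElem, Fin.val_mk] using h2
    have : c < s[j + m] := lt_of_lt_of_le (by rwa [List.getD_eq_getElem _ _ hj] at h) h3
    simp [not_le.2 this]
  calc s.countP (fun a => decide (a ≤ c))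
      = (s.take j).countP (fun a => decide (a ≤ c)) + (s.drop j).countP (fun a => decide (a ≤ c)) := by
        conv_lhs => rw [hsub]; rw [List.countP_append]
    _ ≤ (s.take j).length + 0 := by rw [hzero]; exact Nat.add_le_add List.countP_le_length le_rfl
    _ ≤ j := by rw [List.length_take]; omega

/-- inserting x into sorted t: if at most k-1 elements of t are < x, the k-th entry
(0-indexed) of the inserted list is the (k-1)-th entry of t. -/
lemma orderedInsert_getD {t : List ℝ} (ht : t.Pairwise (· ≤ ·)) {x : ℝ} {k : ℕ}
    (hk : 1 ≤ k) (hklen : k ≤ t.length)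
    (hcount : t.countP (fun a => decide (a < x)) ≤ k - 1) :
    (List.orderedInsert (· ≤ ·) x t).getD k 0 = t.getD (k-1) 0 := by
  rw [List.orderedInsert_eq_take_drop]
  set p : ℝ → Prop := fun b => ¬ x ≤ b with hp
  set A := t.takeWhile fun b => decide (¬ x ≤ b) with hA
  set D := t.dropWhile fun b => decide (¬ x ≤ b) with hD
  have hAD : A ++ D = t := List.takeWhile_append_dropWhile ..
  have hm : A.length ≤ k - 1 := by
    have hall : (A.countP fun a => decide (a < x)) = A.length := by
      apply List.countP_eq_length.2
      intro a ha
      have := List.mem_takeWhile_imp ha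
      simp only [decide_eq_true_eq, not_le] at this
      simpa using this
    calc A.length = A.countP (fun a => decide (a < x)) := hall.symm
      _ ≤ t.countP (fun a => decide (a < x)) := by
          conv_rhs => rw [← hAD, List.countP_append]
          omega
      _ ≤ k - 1 := hcount
  have hmk : A.length < k := by omega
  rw [List.getD_append_right _ _ _ _ (le_of_lt hmk)]
  have h1 : k - A.length = (k - A.length - 1) + 1 := by omega
  rw [h1, List.getD_cons_succ]
  have hDdrop : D = t.drop A.length := by
    rw [← hAD, List.drop_left]
  rw [hDdrop]
  have hidx : k - A.length - 1 < (t.drop A.length).length := by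
    rw [List.length_drop]; omega
  rw [List.getD_eq_getElem _ _ hidx, List.getElem_drop,
    List.getD_eq_getElem _ _ (by omega : k - 1 < t.length)]
  congr 1
  omega



lemma map_update {n : ℕ} (b : Fin n → ℝ) (i : Fin n) (x : ℝ) :
    Finset.univ.val.map (Function.update b i x) =
      x ::ₘ (Finset.univ.val.erase i).map b := by
  have hmem : i ∈ Finset.univ.val := by simp
  have hnd : Finset.univ.val.Nodup := (Finset.univ : Finset (Fin n)).nodup
  conv_lhs => rw [← Multiset.cons_erase hmem]
  rw [Multiset.map_cons, Function.update_self]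
  congr 1
  apply Multiset.map_congr rfl
  intro j hj
  exact Function.update_of_ne (hnd.mem_erase_iff.1 hj).1 _ _

lemma length_t {n : ℕ} (b : Fin n → ℝ) (i : Fin n) :
    (((Finset.univ.val.erase i).map b).sort (· ≤ ·)).length = n - 1 := by
  rw [Multiset.length_sort, Multiset.card_map,
    Multiset.card_erase_of_mem (by simp)]
  simp

lemma sortProfile {n : ℕ} (b : Fin n → ℝ) (i : Fin n) (x : ℝ) :
    ((Finset.univ.val.map (Function.update b i x)).sort (· ≤ ·)) =
      List.orderedInsert (· ≤ ·) x (((Finset.univ.val.erase i).map b).sort (· ≤ ·)) := by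
  set t := ((Finset.univ.val.erase i).map b).sort (· ≤ ·) with hT
  have hts : List.Pairwise (· ≤ ·) t := by
    rw [hT]; exact Multiset.pairwise_sort _ _
  apply List.Perm.eq_of_pairwise' (Multiset.pairwise_sort _ _) (hts.orderedInsert x t)
  refine List.Perm.trans ?_ (List.perm_orderedInsert _ x t).symm
  apply Multiset.coe_eq_coe.1
  rw [Multiset.sort_eq, map_update, ← Multiset.cons_coe, Multiset.sort_eq]

lemma card_filter_eq_countP {n : ℕ} (b : Fin n → ℝ) (i : Fin n) (x : ℝ) (p : ℝ → Prop)
    [DecidablePred p] :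
    (Finset.univ.filter (fun j => p (Function.update b i x j))).card =
      (if p x then 1 else 0) +
        (((Finset.univ.val.erase i).map b).sort (· ≤ ·)).countP (fun a => decide (p a)) := by
  rw [Finset.card_def, Finset.filter_val, ← Multiset.countP_map, map_update,
    Multiset.countP_cons]
  rw [add_comm]
  congr 1
  conv_lhs => rw [← Multiset.sort_eq ((Finset.univ.val.erase i).map b) (· ≤ ·)]
  rw [Multiset.coe_countP]

end PACaux

open PACaux in
lemma util_le {n k : ℕ} (hk : 1 ≤ k) (hkn : k < n) {B vi r' : ℝ}
    (i : Fin n) (b : Fin n → ℝ)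
    (hfeas : orderStat n (Function.update b i vi) (k - 1) / ((n:ℝ) - k) ≤ B / k) :
    utilPAC n k B vi (Function.update b i r') i ≤
      utilPAC n k B vi (Function.update b i vi) i := by
  set t := ((Finset.univ.val.erase i).map b).sort (· ≤ ·) with hT
  have hts : t.Pairwise (· ≤ ·) := by rw [hT]; exact Multiset.pairwise_sort _ _
  have htlen : t.length = n - 1 := length_t b i
  have hnk : (0:ℝ) < (n:ℝ) - k := by
    have : (k:ℝ) < n := by exact_mod_cast hkn
    linarith
  have hlenfull : ∀ x : ℝ,
      ((Finset.univ.val.map (Function.update b i x)).sort (· ≤ ·)).length = n := by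
    intro x
    rw [Multiset.length_sort, Multiset.card_map, ← Finset.card_def, Finset.card_univ,
      Fintype.card_fin]
  have hWin : ∀ x : ℝ, isWinner n k (Function.update b i x) i →
      t.countP (fun a => decide (a < x)) ≤ k - 1 := by
    intro x hw
    have hsub : insert i (Finset.univ.filter fun j => Function.update b i x j < x) ⊆
        Finset.univ.filter (fun j : Fin n =>
          Function.update b i x j < Function.update b i x i ∨
          (Function.update b i x j = Function.update b i x i ∧ j ≤ i)) := by
      intro j hj
      rw [Finset.mem_insert] at hj
      rcases hj with rfl | hj
      · simp
      · rw [Finset.mem_filter] at hj ⊢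
        exact ⟨hj.1, Or.inl (by rw [Function.update_self]; exact hj.2)⟩
    have hnotmem : i ∉ Finset.univ.filter fun j => Function.update b i x j < x := by
      simp
    have hcard := Finset.card_le_card hsub
    rw [Finset.card_insert_of_notMem hnotmem] at hcard
    have h2 : (Finset.univ.filter fun j => Function.update b i x j < x).card + 1 ≤ k :=
      le_trans hcard hw
    rw [card_filter_eq_countP b i x (fun a => a < x)] at h2
    simp only [lt_irrefl, if_false, zero_add] at h2
    rw [← hT] at h2
    omega
  have hLose : ∀ x : ℝ, ¬ isWinner n k (Function.update b i x) i →
      k ≤ t.countP (fun a => decide (a ≤ x)) := by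
    intro x hl
    rw [isWinner, not_le] at hl
    have hsub : (Finset.univ.filter (fun j : Fin n =>
          Function.update b i x j < Function.update b i x i ∨
          (Function.update b i x j = Function.update b i x i ∧ j ≤ i))) ⊆
        Finset.univ.filter fun j => Function.update b i x j ≤ x := by
      intro j hj
      rw [Finset.mem_filter] at hj ⊢
      refine ⟨hj.1, ?_⟩
      rcases hj.2 with h | h
      · rw [Function.update_self] at h; exact le_of_lt h
      · rw [Function.update_self] at h; exact le_of_eq h.1
    have hcard := lt_of_lt_of_le hl (Finset.card_le_card hsub)
    rw [card_filter_eq_countP b i x (fun a => a ≤ x)] at hcard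
    simp only [le_refl, if_true] at hcard
    rw [← hT] at hcard
    omega
  have hOS : ∀ x : ℝ, isWinner n k (Function.update b i x) i →
      orderStat n (Function.update b i x) k = t.getD (k-1) 0 := by
    intro x hw
    rw [orderStat, sortProfile b i x, ← hT]
    exact orderedInsert_getD hts hk (by omega) (hWin x hw)
  have hTrueWin : isWinner n k (Function.update b i vi) i →
      vi ≤ orderStat n (Function.update b i vi) (k-1) := by
    intro hw
    by_contra hcon
    push_neg at hcon
    rw [orderStat] at hcon
    have hcount := lt_count_of_getD_lt (Multiset.pairwise_sort _ _)
      (by rw [hlenfull vi]; omega : k - 1 <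
        ((Finset.univ.val.map (Function.update b i vi)).sort (· ≤ ·)).length) hcon
    have hcc : ((Finset.univ.val.map (Function.update b i vi)).sort (· ≤ ·)).countP
        (fun a => decide (a < vi)) = t.countP (fun a => decide (a < vi)) := by
      rw [sortProfile b i vi, ← hT,
        (List.perm_orderedInsert _ vi t).countP_eq, List.countP_cons]
      simp
    rw [hcc] at hcount
    have := hWin vi hw
    omega
  have hTrueLose : ¬ isWinner n k (Function.update b i vi) i →
      t.getD (k-1) 0 ≤ vi := by
    intro hl
    by_contra hcon
    push_neg at hcon
    have hcount := count_le_of_lt_getD hts (by omega : k - 1 < t.length) hcon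
    have := hLose vi hl
    omega
  rw [utilPAC, utilPAC]
  by_cases hwv : isWinner n k (Function.update b i vi) i
  · rw [if_pos hwv]
    have h1 : vi ≤ orderStat n (Function.update b i vi) (k-1) := hTrueWin hwv
    have h2 : orderStat n (Function.update b i vi) (k-1) ≤
        orderStat n (Function.update b i vi) k := by
      apply sorted_getD_mono (Multiset.pairwise_sort _ _) (by omega)
      rw [hlenfull vi]; omega
    have hmin : vi / ((n:ℝ)-k) ≤
        min (B/k) (orderStat n (Function.update b i vi) k / ((n:ℝ)-k)) := by
      apply le_min
      · calc vi/((n:ℝ)-k) ≤ orderStat n (Function.update b i vi) (k-1) / ((n:ℝ)-k) := by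
              gcongr
          _ ≤ B/(k:ℝ) := hfeas
      · gcongr
        exact le_trans h1 h2
    by_cases hwr : isWinner n k (Function.update b i r') i
    · rw [if_pos hwr, hOS r' hwr, hOS vi hwv]
    · rw [if_neg hwr]
      linarith
  · rw [if_neg hwv]
    by_cases hwr : isWinner n k (Function.update b i r') i
    · rw [if_pos hwr]
      have h1 : t.getD (k-1) 0 ≤ vi := hTrueLose hwv
      have h2 : orderStat n (Function.update b i r') k = t.getD (k-1) 0 := hOS r' hwr
      have h3 : min (B/(k:ℝ)) (orderStat n (Function.update b i r') k / ((n:ℝ)-k)) ≤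
          vi/((n:ℝ)-k) := by
        refine le_trans (min_le_right _ _) ?_
        rw [h2]; gcongr
      linarith
    · rw [if_neg hwr]

/-- Bayesian-Nash equilibrium of the fixed-`k` PAC mechanism: let `μ` be a
probability measure over opponents' truthful valuation profiles (a profile `b`
contributes the coordinates `b j`, `j ≠ i`; coordinate `i` is replaced by the
report of client `i`).  If for `μ`-almost every realization the PAC feasibility
condition holds (the `k`-th smallest valuation `w_k` of the realized truthful
profile satisfies `w_k/(n-k) ≤ B/k`) and the utility functions are integrable,
then for client `i` with true valuation `vi` and every nonnegative misreport `r'`,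
the expected utility of truthful reporting weakly dominates that of misreporting. -/
theorem pac_bayesian_nash
    (n k : ℕ) (hk : 1 ≤ k) (hkn : k < n)
    (B : ℝ) (hB : 0 < B)
    (i : Fin n) (vi : ℝ) (hvi : 0 ≤ vi)
    (μ : Measure (Fin n → ℝ)) [IsProbabilityMeasure μ]
    (hfeas : ∀ᵐ b ∂μ,
      orderStat n (Function.update b i vi) (k - 1) / ((n : ℝ) - k) ≤ B / k)
    (hint_truth : Integrable (fun b => utilPAC n k B vi (Function.update b i vi) i) μ) :
    ∀ r' : ℝ, 0 ≤ r' →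
      Integrable (fun b => utilPAC n k B vi (Function.update b i r') i) μ →
      ∫ b, utilPAC n k B vi (Function.update b i r') i ∂μ ≤
        ∫ b, utilPAC n k B vi (Function.update b i vi) i ∂μ := by
  intro r' _ hint_mis
  apply integral_mono_ae hint_mis hint_truth
  filter_upwards [hfeas] with b hb
  exact util_le hk hkn i b hb
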